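/- Let E be a module with a bilinear bracket [·,·] and let I, J : E → E be anti-commuting linear maps such that T(I)(JX,Y) = T(I)(X,JY) = 0 for all X, Y in E, and such that the concomitant C(I,J)(X,Y) = [X,Y]_{I,J} + [X,Y]_{J,I} vanishes. Then for every natural number n, C(I, I^n∘J)(X,Y) = 0 for all X, Y in E. -/

import Mathlib

variable {R : Type*} [CommRing R] {E : Type*} [AddCommGroup E] [Module R E]

/-- The underlying binary operation of a bilinear bracket. -/
def br2 (b : E →ₗ[R] E →ₗ[R] E) : E → E → E := fun x y => b x y

/-- Deformation of a bracket `b` by an endomorphism `I`: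
`[X,Y]_I = [IX,Y] + [X,IY] - I [X,Y]`. -/
def deform (I : Module.End R E) (b : E → E → E) : E → E → E :=
  fun X Y => b (I X) Y + b X (I Y) - I (b X Y)

/-- Nijenhuis torsion of `I` with respect to the bracket `b`. -/
def torsion (I : Module.End R E) (b : E → E → E) : E → E → E :=
  fun X Y => b (I X) (I Y) - I (deform I b X Y)


/-- Concomitant `C(I,J)(X,Y) = [X,Y]_{I,J} + [X,Y]_{J,I}`. -/
def conc (I J : Module.End R E) (b : E → E → E) : E → E → E :=
  fun X Y => deform J (deform I b) X Y + deform I (deform J b) X Y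

lemma torsion_neg_left (b : E →ₗ[R] E →ₗ[R] E) (I : Module.End R E) (u v : E) :
    torsion I (br2 b) (-u) v = -(torsion I (br2 b) u v) := by
  simp [torsion, deform, br2]
  abel

lemma torsion_neg_right (b : E →ₗ[R] E →ₗ[R] E) (I : Module.End R E) (u v : E) :
    torsion I (br2 b) u (-v) = -(torsion I (br2 b) u v) := by
  simp [torsion, deform, br2]
  abel

lemma key (b : E →ₗ[R] E →ₗ[R] E) (I K : Module.End R E)
    (h : I * K = -(K * I)) (X Y : E) :
    conc I (I * K) (br2 b) X Y =
      I (conc I K (br2 b) X Y)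
        + (torsion I (br2 b) (K X) Y + torsion I (br2 b) (K X) Y)
        + (torsion I (br2 b) X (K Y) + torsion I (br2 b) X (K Y)) := by
  have h' : ∀ z : E, K (I z) = -(I (K z)) := by
    intro z
    have := congrFun (congrArg (DFunLike.coe) h) z
    simp only [Module.End.mul_apply, LinearMap.neg_apply] at this
    rw [this, neg_neg]
  simp only [conc, deform, torsion, br2, Module.End.mul_apply]
  simp only [h', map_add, map_sub, map_neg, LinearMap.neg_apply, LinearMap.add_apply,
    LinearMap.sub_apply]
  abel

theorem stmt6 (b : E →ₗ[R] E →ₗ[R] E) (I J : Module.End R E)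
    (hanti : I * J = -(J * I))
    (hT1 : ∀ X Y : E, torsion I (br2 b) (J X) Y = 0)
    (hT2 : ∀ X Y : E, torsion I (br2 b) X (J Y) = 0)
    (hC : ∀ X Y : E, conc I J (br2 b) X Y = 0)
    (n : ℕ) (X Y : E) :
    conc I (I ^ n * J) (br2 b) X Y = 0 := by
  suffices H : ∀ n : ℕ,
      (I * (I ^ n * J) = -((I ^ n * J) * I)) ∧
      (∀ X Y : E, torsion I (br2 b) ((I ^ n * J) X) Y = 0) ∧
      (∀ X Y : E, torsion I (br2 b) X ((I ^ n * J) Y) = 0) ∧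
      (∀ X Y : E, conc I (I ^ n * J) (br2 b) X Y = 0) by
    exact (H n).2.2.2 X Y
  intro n
  induction n with
  | zero =>
    simpa using ⟨hanti, hT1, hT2, hC⟩
  | succ n ih =>
    obtain ⟨ha, h1, h2, hc⟩ := ih
    set K := I ^ n * J with hK
    have hpow : I ^ (n + 1) * J = I * K := by
      rw [hK, pow_succ', mul_assoc]
    have ha' : ∀ z : E, K (I z) = -(I (K z)) := by
      intro z
      have := congrFun (congrArg (DFunLike.coe) ha) z
      simp only [Module.End.mul_apply, LinearMap.neg_apply] at this
      rw [this, neg_neg]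
    refine ⟨?_, ?_, ?_, ?_⟩
    · have hKI : K * I = -(I * K) := by rw [ha, neg_neg]
      rw [hpow, mul_assoc, hKI, mul_neg, neg_neg]
    · intro X Y
      rw [hpow]
      have : (I * K) X = -(K (I X)) := by
        simp [Module.End.mul_apply, ha' X]
      rw [this, torsion_neg_left, h1, neg_zero]
    · intro X Y
      rw [hpow]
      have : (I * K) Y = -(K (I Y)) := by
        simp [Module.End.mul_apply, ha' Y]
      rw [this, torsion_neg_right, h2, neg_zero]
    · intro X Y
      rw [hpow, key b I K ha, hc, h1, h2]
      simp
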